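/- In the standard MV-algebra on [0,1] with Łukasiewicz operations x⊕y = min(x+y,1), ¬x = 1−x, x→y = min(1−x+y,1), and x∧y = min(x,y), for every n ≥ 2 and every tuple (a₁,…,aₙ) ∈ [0,1]ⁿ, the formula δ = (⊕_{i≤n} p_i) ∧ ⋀_{i≤n}((⊕_{j≠i} p_j) → ¬p_i) evaluates to 1 under the assignment p_i ↦ a_i if and only if ∑_{i≤n} a_i = 1. -/

import Mathlib

noncomputable def lukOplus (x y : ℝ) : ℝ := min (x + y) 1
noncomputable def lukNeg (x : ℝ) : ℝ := 1 - x
noncomputable def lukImp (x y : ℝ) : ℝ := min (1 - x + y) 1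
noncomputable def lukAnd (x y : ℝ) : ℝ := min x y

/-- Iterated ⊕ of a list of truth values. -/
noncomputable def bigOplus (l : List ℝ) : ℝ := l.foldr lukOplus 0

lemma bigOplus_eq (l : List ℝ) (h : ∀ x ∈ l, 0 ≤ x) : bigOplus l = min l.sum 1 := by
  induction l with
  | nil => simp [bigOplus]
  | cons x t ih =>
    have hx : 0 ≤ x := h x (by simp)
    have ht : ∀ y ∈ t, 0 ≤ y := fun y hy => h y (by simp [hy])
    have hts : 0 ≤ t.sum := List.sum_nonneg ht
    have : bigOplus (x :: t) = lukOplus x (bigOplus t) := rfl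
    rw [this, ih ht, lukOplus, List.sum_cons]
    rcases le_or_gt t.sum 1 with h1 | h1
    · rw [min_eq_left h1]
    · rw [min_eq_right h1.le, min_eq_right (by linarith), min_eq_right (by linarith)]

lemma sum_eraseIdx (l : List ℝ) (i : ℕ) (h : i < l.length) :
    (l.eraseIdx i).sum = l.sum - l.get ⟨i, h⟩ := by
  induction l generalizing i with
  | nil => simp at h
  | cons x t ih =>
    cases i with
    | zero => simp
    | succ j =>
      simp only [List.eraseIdx_cons_succ, List.sum_cons]
      rw [ih j (by simpa using h)]
      simp [List.get]
      ring

theorem stmt0 (n : ℕ) (hn : 2 ≤ n) (a : Fin n → ℝ)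
    (ha : ∀ i, a i ∈ Set.Icc (0:ℝ) 1)
    (hne : (Finset.univ : Finset (Fin n)).Nonempty) :
    lukAnd (bigOplus (List.ofFn a))
      (Finset.univ.inf' hne (fun i =>
        lukImp (bigOplus ((List.ofFn a).eraseIdx i)) (lukNeg (a i)))) = 1
      ↔ ∑ i, a i = 1 := by
  set S := ∑ i, a i with hS
  have hnn : ∀ x ∈ List.ofFn a, 0 ≤ x := by
    intro x hx
    rw [List.mem_ofFn] at hx
    obtain ⟨i, rfl⟩ := hx
    exact (ha i).1
  have hsum : (List.ofFn a).sum = S := by rw [List.sum_ofFn]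
  have hB : bigOplus (List.ofFn a) = min S 1 := by rw [bigOplus_eq _ hnn, hsum]
  have hlen : (List.ofFn a).length = n := List.length_ofFn
  have herase : ∀ i : Fin n, bigOplus ((List.ofFn a).eraseIdx i) = min (S - a i) 1 := by
    intro i
    rw [bigOplus_eq _ (fun x hx => hnn x (List.eraseIdx_subset hx)),
      sum_eraseIdx _ i (by rw [hlen]; exact i.2), hsum]
    congr 2
    simp [List.get_ofFn]
  have hSnn : 0 ≤ S := Finset.sum_nonneg fun i _ => (ha i).1
  constructor
  · intro h
    have h1 : (1:ℝ) ≤ bigOplus (List.ofFn a) := by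
      rw [← h]; exact min_le_left _ _
    have hSge : 1 ≤ S := by
      rw [hB] at h1
      by_contra hc
      push_neg at hc
      rw [min_eq_left hc.le] at h1
      linarith
    have h2 : ∀ i : Fin n, (1:ℝ) ≤ lukImp (bigOplus ((List.ofFn a).eraseIdx i)) (lukNeg (a i)) := by
      intro i
      calc (1:ℝ) = _ := h.symm
      _ ≤ _ := (min_le_right _ _).trans (Finset.inf'_le _ (Finset.mem_univ i))
    by_contra hc
    have hSgt : 1 < S := lt_of_le_of_ne hSge (fun e => hc e.symm)
    have hall0 : ∀ i : Fin n, a i ≤ 0 := by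
      intro i
      have := h2 i
      rw [herase i, lukImp, lukNeg] at this
      have h1' : 1 ≤ 1 - min (S - a i) 1 + (1 - a i) := le_trans this (min_le_left _ _)
      rcases min_cases (S - a i) 1 with ⟨he, _⟩ | ⟨he, _⟩ <;> rw [he] at h1' <;> linarith [(ha i).2]
    have : S ≤ 0 := hS ▸ Finset.sum_nonpos fun i _ => hall0 i
    linarith
  · intro h
    have himp : ∀ i : Fin n,
        lukImp (bigOplus ((List.ofFn a).eraseIdx i)) (lukNeg (a i)) = 1 := by
      intro i
      rw [herase i, h, lukImp, lukNeg,
        min_eq_left (by linarith [(ha i).1] : (1:ℝ) - a i ≤ 1)]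
      norm_num
    have hinf : Finset.univ.inf' hne (fun i =>
        lukImp (bigOplus ((List.ofFn a).eraseIdx i)) (lukNeg (a i))) = 1 := by
      rw [Finset.inf'_congr hne rfl (fun i _ => himp i), Finset.inf'_const]
    rw [lukAnd, hB, h, hinf]
    simp
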